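/- For every integer n and positive integer Q, Σ_{θ∈F_Q} e(nθ) = Σ_{d|n, d≥1} d·M(Q/d), where for n = 0 the right side is interpreted as Σ_{d≥1} M(Q/d) = |F_Q|. -/

import Mathlib

open Finset Complex

def farey (Q : ℕ) : Finset ℚ :=
  (Finset.Icc 1 Q).biUnion fun q =>
    ((Finset.Icc 1 q).filter fun a => Nat.gcd a q = 1).image fun a : ℕ => (a : ℚ) / (q : ℚ)

noncomputable def e (x : ℝ) : ℂ := Complex.exp (2 * Real.pi * Complex.I * x)

/-- The Mertens summatory function `M(x) = ∑_{m ≤ x} μ(m)`. -/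
def mertens (x : ℕ) : ℤ := ∑ m ∈ Finset.Icc 1 x, ArithmeticFunction.moebius m

open ArithmeticFunction ArithmeticFunction.Moebius in
lemma moeb_sum (g : ℕ) : (∑ d ∈ g.divisors, μ d : ℤ) = if g = 1 then 1 else 0 := by
  have := congrArg (fun f : ArithmeticFunction ℤ => f g) moebius_mul_coe_zeta
  simp only [coe_mul_zeta_apply, one_apply] at this
  exact this

lemma e_pow (x : ℝ) (b : ℕ) : e x ^ b = e (x * b) := by
  rw [e, e, ← Complex.exp_nat_mul]; push_cast; ring_nf

lemma e_eq_one_iff (x : ℝ) : e x = 1 ↔ ∃ k : ℤ, x = k := by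
  rw [e, Complex.exp_eq_one_iff]
  constructor
  · rintro ⟨k, hk⟩
    refine ⟨k, ?_⟩
    have h2 : (2 * Real.pi * Complex.I : ℂ) ≠ 0 := by
      simp [Real.pi_ne_zero, Complex.I_ne_zero]
    have : (x : ℂ) = (k : ℂ) := mul_left_cancel₀ h2 (by linear_combination hk)
    exact_mod_cast this
  · rintro ⟨k, hk⟩
    exact ⟨k, by rw [hk]; push_cast; ring⟩

lemma S_eval (m : ℕ) (hm : 0 < m) (n : ℤ) :
    ∑ b ∈ Icc 1 m, e ((n : ℝ) * (b / m)) = if (m : ℤ) ∣ n then (m : ℂ) else 0 := by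
  have hm0 : (m : ℝ) ≠ 0 := by positivity
  set ζ : ℂ := e ((n : ℝ) / m) with hζ
  have hterm : ∀ b : ℕ, e ((n : ℝ) * (b / m)) = ζ ^ b := by
    intro b; rw [hζ, e_pow]; congr 1; field_simp
  have hζm : ζ ^ m = 1 := by
    rw [hζ, e_pow, e_eq_one_iff]
    exact ⟨n, by field_simp⟩
  have hdvd : ζ = 1 ↔ (m : ℤ) ∣ n := by
    rw [hζ, e_eq_one_iff]
    constructor
    · rintro ⟨k, hk⟩
      refine ⟨k, ?_⟩
      have : (n : ℝ) = m * k := by field_simp at hk; linarith [hk]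
      exact_mod_cast this
    · rintro ⟨k, hk⟩
      exact ⟨k, by rw [hk]; push_cast; field_simp⟩
  simp only [hterm]
  by_cases h : (m : ℤ) ∣ n
  · rw [if_pos h]
    rw [← hdvd] at h
    simp [h, Nat.card_Icc]
  · rw [if_neg h]
    rw [← hdvd] at h
    have h1 : ζ - 1 ≠ 0 := sub_ne_zero.mpr h
    have : ∑ b ∈ Icc 1 m, ζ ^ b = ζ * ∑ b ∈ range m, ζ ^ b := by
      rw [mul_sum, ← Finset.Ico_add_one_right_eq_Icc, Finset.sum_Ico_eq_sum_range]
      simp [pow_succ, pow_add, mul_comm]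
    rw [this, geom_sum_eq h, hζm]
    simp

lemma num_den (a q : ℕ) (hq : q ≠ 0) (h : Nat.gcd a q = 1) :
    ((a:ℚ)/q).num = a ∧ ((a:ℚ)/q).den = q := by
  have hc : (a : ℤ).natAbs.Coprime q := by simpa [Int.natAbs_natCast] using h
  have : ((a:ℚ)/q) = Rat.mk' (a : ℤ) q hq hc := by
    rw [Rat.mk_eq_divInt, Rat.divInt_eq_div]; push_cast; ring
  rw [this]; exact ⟨rfl, rfl⟩

lemma sum_farey (Q : ℕ) (f : ℚ → ℂ) :
    ∑ θ ∈ farey Q, f θ =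
      ∑ q ∈ Icc 1 Q, ∑ a ∈ (Icc 1 q).filter (fun a => Nat.gcd a q = 1), f ((a:ℚ)/q) := by
  rw [farey, sum_biUnion]
  · refine sum_congr rfl fun q hq => sum_image fun a ha b hb hab => ?_
    have hq0 : q ≠ 0 := by
      have := (mem_Icc.mp hq).1; omega
    have h1 := (num_den a q hq0 (mem_filter.mp ha).2).1
    have h2 := (num_den b q hq0 (mem_filter.mp hb).2).1
    rw [hab] at h1; rw [h1] at h2; exact_mod_cast h2
  · intro q hq q' hq' hne
    rw [Finset.mem_coe] at hq hq'
    rw [Function.onFun, Finset.disjoint_left]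
    rintro θ h1 h2
    simp only [mem_image, mem_filter, mem_coe] at h1 h2
    obtain ⟨a, ⟨ha, hga⟩, rfl⟩ := h1
    obtain ⟨b, ⟨hb, hgb⟩, hbe⟩ := h2
    have hq0 : q ≠ 0 := by have := (mem_Icc.mp hq).1; omega
    have hq'0 : q' ≠ 0 := by have := (mem_Icc.mp hq').1; omega
    have h1 := (num_den a q hq0 hga).2
    have h2 := (num_den b q' hq'0 hgb).2
    rw [hbe] at h2
    exact hne (h2.symm.trans h1).symm

open ArithmeticFunction ArithmeticFunction.Moebius in
lemma T_eval (q : ℕ) (hq : 0 < q) (n : ℤ) :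
    ∑ a ∈ (Icc 1 q).filter (fun a => Nat.gcd a q = 1), e ((n:ℝ) * (a / q)) =
      ∑ p ∈ q.divisorsAntidiagonal,
        (μ p.1 : ℂ) * (if ((p.2 : ℕ) : ℤ) ∣ n then ((p.2 : ℕ) : ℂ) else 0) := by
  rw [Nat.sum_divisorsAntidiagonal (fun d m => (μ d : ℂ) * (if (m : ℤ) ∣ n then (m : ℂ) else 0))]
  rw [sum_filter]
  have step1 : ∀ a ∈ Icc 1 q,
      (if Nat.gcd a q = 1 then e ((n:ℝ) * (a / q)) else 0) =
      ∑ d ∈ q.divisors, if d ∣ a then (μ d : ℂ) * e ((n:ℝ) * (a / q)) else 0 := by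
    intro a ha
    have ha1 : 1 ≤ a := (mem_Icc.mp ha).1
    have hset : q.divisors.filter (fun d => d ∣ a) = (Nat.gcd a q).divisors := by
      ext d
      simp only [Nat.mem_divisors, mem_filter, Nat.dvd_gcd_iff]
      constructor
      · rintro ⟨⟨h1, h2⟩, h3⟩; exact ⟨⟨h3, h1⟩, Nat.gcd_ne_zero_left (by omega)⟩
      · rintro ⟨⟨h1, h2⟩, h3⟩; exact ⟨⟨h2, hq.ne'⟩, h1⟩
    rw [← sum_filter, hset, ← sum_mul]
    have : (∑ d ∈ (Nat.gcd a q).divisors, (μ d : ℂ)) = ((if Nat.gcd a q = 1 then 1 else 0 : ℤ) : ℂ) := by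
      rw [← moeb_sum]; push_cast; ring
    rw [this]
    split <;> simp
  rw [sum_congr rfl step1, sum_comm]
  refine sum_congr rfl fun d hd => ?_
  obtain ⟨hdq, -⟩ := Nat.mem_divisors.mp hd
  have hd0 : 0 < d := Nat.pos_of_mem_divisors hd
  have hqd0 : 0 < q / d := Nat.div_pos (Nat.le_of_dvd hq hdq) hd0
  rw [← sum_filter, ← mul_sum, ← S_eval (q / d) hqd0 n]
  congr 1
  refine sum_nbij' (fun a => a / d) (fun b => d * b) ?_ ?_ ?_ ?_ ?_
  · intro a ha
    simp only [mem_filter, mem_Icc] at ha ⊢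
    obtain ⟨⟨h1, h2⟩, h3⟩ := ha
    constructor
    · exact Nat.one_le_div_iff hd0 |>.mpr (Nat.le_of_dvd (by omega) h3)
    · exact Nat.div_le_div_right h2
  · intro b hb
    simp only [mem_Icc, mem_filter] at hb ⊢
    obtain ⟨h1, h2⟩ := hb
    refine ⟨⟨by nlinarith, ?_⟩, Dvd.intro b rfl⟩
    calc d * b ≤ d * (q / d) := Nat.mul_le_mul_left d h2
      _ = q := Nat.mul_div_cancel' hdq
  · intro a ha
    simp only [mem_filter] at ha
    exact Nat.mul_div_cancel' ha.2
  · intro b hb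
    exact Nat.mul_div_cancel_left b hd0
  · intro a ha
    simp only [mem_filter, mem_Icc] at ha
    obtain ⟨⟨h1, h2⟩, c, rfl⟩ := ha
    congr 1
    have hdr : (d : ℝ) ≠ 0 := by positivity
    have hc : ((d * c / d : ℕ) : ℝ) = (c : ℝ) := by rw [Nat.mul_div_cancel_left c hd0]
    have hqd : ((q / d : ℕ) : ℝ) = (q : ℝ) / d := by
      rw [Nat.cast_div hdq hdr]
    rw [hc, hqd]
    have hqr : (q : ℝ) ≠ 0 := by positivity
    push_cast
    field_simp

theorem sum_farey_exp (Q : ℕ) (hQ : 0 < Q) (n : ℤ) :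
    ∑ θ ∈ farey Q, e ((n : ℝ) * (θ : ℝ)) =
      ∑ d ∈ Finset.Icc 1 Q, if (d : ℤ) ∣ n then (d : ℂ) * (mertens (Q / d) : ℂ) else 0 := by
  rw [sum_farey Q (fun θ => e ((n : ℝ) * (θ : ℝ)))]
  have hcast : ∀ q ∈ Icc 1 Q, ∀ a ∈ (Icc 1 q).filter (fun a => Nat.gcd a q = 1),
      e ((n : ℝ) * ((((a:ℚ)/q) : ℚ) : ℝ)) = e ((n:ℝ) * (a / q)) := by
    intro q hq a ha
    congr 1
    push_cast
    ring
  calc ∑ q ∈ Icc 1 Q, ∑ a ∈ (Icc 1 q).filter (fun a => Nat.gcd a q = 1),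
          e ((n : ℝ) * ((((a:ℚ)/q) : ℚ) : ℝ))
      = ∑ q ∈ Icc 1 Q, ∑ p ∈ q.divisorsAntidiagonal,
          (ArithmeticFunction.moebius p.1 : ℂ) *
            (if ((p.2 : ℕ) : ℤ) ∣ n then ((p.2 : ℕ) : ℂ) else 0) := by
        refine sum_congr rfl fun q hq => ?_
        rw [sum_congr rfl (hcast q hq)]
        exact T_eval q (by have := (mem_Icc.mp hq).1; omega) n
    _ = ∑ m ∈ Icc 1 Q, ∑ d ∈ Icc 1 (Q / m),
          (ArithmeticFunction.moebius d : ℂ) *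
            (if (m : ℤ) ∣ n then (m : ℂ) else 0) := by
        rw [sum_sigma', sum_sigma']
        refine sum_nbij' (fun p => ⟨p.2.2, p.2.1⟩) (fun p => ⟨p.2 * p.1, (p.2, p.1)⟩)
          ?_ ?_ ?_ ?_ ?_
        · rintro ⟨q, d, m⟩ hp
          simp only [mem_sigma, mem_Icc, Nat.mem_divisorsAntidiagonal] at hp ⊢
          obtain ⟨⟨h1, h2⟩, h3, h4⟩ := hp
          have hd : 1 ≤ d := by
            rcases Nat.eq_zero_or_pos d with h | h
            · subst h; simp at h3; omega
            · exact h
          have hm : 1 ≤ m := by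
            rcases Nat.eq_zero_or_pos m with h | h
            · subst h; simp at h3; omega
            · exact h
          refine ⟨⟨hm, ?_⟩, hd, ?_⟩
          · calc m ≤ d * m := Nat.le_mul_of_pos_left m (by omega)
              _ = q := h3
              _ ≤ Q := h2
          · rw [Nat.le_div_iff_mul_le (by omega)]
            omega
        · rintro ⟨m, d⟩ hp
          simp only [mem_sigma, mem_Icc, Nat.mem_divisorsAntidiagonal] at hp ⊢
          obtain ⟨⟨h1, h2⟩, h3, h4⟩ := hp
          have := (Nat.le_div_iff_mul_le (by omega)).mp h4
          exact ⟨⟨by nlinarith, by omega⟩, trivial, Nat.mul_ne_zero (by omega) (by omega)⟩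
        · rintro ⟨q, d, m⟩ hp
          simp only [mem_sigma, Nat.mem_divisorsAntidiagonal] at hp
          obtain ⟨-, h3, -⟩ := hp
          simp [h3]
        · rintro ⟨m, d⟩ hp
          rfl
        · rintro ⟨q, d, m⟩ hp
          rfl
    _ = ∑ d ∈ Finset.Icc 1 Q, if (d : ℤ) ∣ n then (d : ℂ) * (mertens (Q / d) : ℂ) else 0 := by
        refine sum_congr rfl fun m hm => ?_
        rw [← sum_mul]
        have : (∑ d ∈ Icc 1 (Q / m), (ArithmeticFunction.moebius d : ℂ))
            = (mertens (Q / m) : ℂ) := by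
          rw [mertens]; push_cast; ring
        rw [this]
        split <;> [ring; ring]
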